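/- Let S be an inverse semigroup with zero and let X ⊆ E(S) × Finset E(S) be S-invariant, meaning that whenever (e, F) ∈ X and s ∈ S, the pair (s⁻¹·e·s, {s⁻¹·f·s : f ∈ F}) also belongs to X. If φ : E(S) → Bool is an X-to-join character of E(S) and s ∈ S satisfies φ(s⁻¹·s) = true, then the map s·φ : E(S) → Bool defined by (s·φ)(e) = φ(s⁻¹·e·s) is again an X-to-join character of E(S). (The invariance part of Lemma 3.11: \hat{E(S)}_X is invariant under the natural action of S.) -/
import Mathlib


/-- An inverse semigroup with zero: a semigroup with an absorbing element `0` and an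
inverse operation satisfying `s * s⁻¹ * s = s` and `s⁻¹ * s * s⁻¹ = s⁻¹`, in which any two
idempotents commute. -/
class InverseSemigroupWithZero (S : Type*) extends Semigroup S, Zero S, Inv S where
  zero_mul : ∀ s : S, 0 * s = 0
  mul_zero : ∀ s : S, s * 0 = 0
  mul_inv_mul : ∀ s : S, s * s⁻¹ * s = s
  inv_mul_inv : ∀ s : S, s⁻¹ * s * s⁻¹ = s⁻¹
  idem_comm : ∀ e f : S, e * e = e → f * f = f → e * f = f * e

namespace InverseSemigroupWithZero

variable {S : Type*} [InverseSemigroupWithZero S]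

/-- The semilattice `E(S)` of idempotents of `S`. -/
def IdemE (S : Type*) [InverseSemigroupWithZero S] : Type _ :=
  {e : S // e * e = e}

theorem zero_idem : (0 : S) * 0 = 0 := mul_zero 0

theorem mul_idem {e f : S} (he : e * e = e) (hf : f * f = f) :
    (e * f) * (e * f) = e * f := by
  have hc : e * f = f * e := idem_comm e f he hf
  calc (e * f) * (e * f) = e * ((f * e) * f) := by rw [mul_assoc, ← mul_assoc f e f]
    _ = e * ((e * f) * f) := by rw [← hc]
    _ = e * e * (f * f) := by rw [mul_assoc e f f, ← mul_assoc]
    _ = e * f := by rw [he, hf]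

theorem rr_idem (s : S) : (s * s⁻¹) * (s * s⁻¹) = s * s⁻¹ := by
  rw [mul_assoc, ← mul_assoc s⁻¹ s s⁻¹, inv_mul_inv]

theorem dd_idem (s : S) : (s⁻¹ * s) * (s⁻¹ * s) = s⁻¹ * s := by
  rw [mul_assoc, ← mul_assoc s s⁻¹ s, mul_inv_mul]

theorem conj_idem (s : S) {e : S} (he : e * e = e) :
    (s⁻¹ * e * s) * (s⁻¹ * e * s) = s⁻¹ * e * s := by
  have hc : e * (s * s⁻¹) = (s * s⁻¹) * e := idem_comm e (s * s⁻¹) he (rr_idem s)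
  have key : e * (s * (s⁻¹ * (e * s))) = e * s := by
    rw [← mul_assoc s s⁻¹ (e * s), ← mul_assoc (s * s⁻¹) e s, ← hc,
      mul_assoc e (s * s⁻¹) s, mul_inv_mul, ← mul_assoc e e s, he]
  calc (s⁻¹ * e * s) * (s⁻¹ * e * s) = s⁻¹ * (e * (s * (s⁻¹ * (e * s)))) := by
        simp only [mul_assoc]
    _ = s⁻¹ * (e * s) := by rw [key]
    _ = s⁻¹ * e * s := by rw [← mul_assoc]

/-- The meet `e ⊓ f = e·f` in `E(S)`. -/
def emul (e f : IdemE S) : IdemE S := ⟨e.1 * f.1, mul_idem e.2 f.2⟩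

/-- The bottom element `0` of `E(S)`. -/
def ezero : IdemE S := ⟨0, zero_idem⟩

/-- Conjugation `e ↦ s⁻¹·e·s` on `E(S)`. -/
def econj (s : S) (e : IdemE S) : IdemE S := ⟨s⁻¹ * e.1 * s, conj_idem s e.2⟩

/-- A character of `E(S)`: a map `E(S) → Bool` sending `0` to `false`, preserving the
meet (= multiplication), and not identically false. -/
def IsChar (φ : IdemE S → Bool) : Prop :=
  φ ezero = false ∧ (∀ e f : IdemE S, φ (emul e f) = (φ e && φ f)) ∧
    ∃ e : IdemE S, φ e = true

instance [DecidableEq S] : DecidableEq (IdemE S) :=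
  inferInstanceAs (DecidableEq {e : S // e * e = e})

/-- A character of `E(S)` is `X`-to-join if for every `(e, F) ∈ X`, `φ e = true` iff
`φ f = true` for some `f ∈ F`. -/
def IsXtoJoinChar (X : Set (IdemE S × Finset (IdemE S))) (φ : IdemE S → Bool) : Prop :=
  IsChar φ ∧ ∀ p ∈ X, (φ p.1 = true ↔ ∃ f ∈ p.2, φ f = true)

/-- invariance part of Lemma 3.11.  Let `X` be an `S`-invariant subset
of `E(S) × 𝒫_fin(E(S))`.  If `φ` is an `X`-to-join character of `E(S)` and
`φ (s⁻¹·s) = true`, then `s·φ : e ↦ φ (s⁻¹·e·s)` is again an `X`-to-join character. -/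
theorem statement14 [DecidableEq S] (X : Set (IdemE S × Finset (IdemE S)))
    (hXinv : ∀ p ∈ X, ∀ s : S, (econj s p.1, p.2.image (econj s)) ∈ X)
    (φ : IdemE S → Bool) (hφ : IsXtoJoinChar X φ)
    (s : S) (hs : φ ⟨s⁻¹ * s, dd_idem s⟩ = true) :
    IsXtoJoinChar X fun e : IdemE S => φ (econj s e) := by
  obtain ⟨⟨hz, hmul, _⟩, hX⟩ := hφ
  have conj_mul : ∀ e f : IdemE S, econj s (emul e f) = emul (econj s e) (econj s f) := by
    intro e f
    apply Subtype.ext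
    show s⁻¹ * (e.1 * f.1) * s = (s⁻¹ * e.1 * s) * (s⁻¹ * f.1 * s)
    have hc : e.1 * (s * s⁻¹) = (s * s⁻¹) * e.1 := idem_comm _ _ e.2 (rr_idem s)
    calc s⁻¹ * (e.1 * f.1) * s
        = (s⁻¹ * s * s⁻¹) * (e.1 * f.1) * s := by rw [inv_mul_inv]
      _ = s⁻¹ * ((s * s⁻¹) * e.1) * (f.1 * s) := by simp only [mul_assoc]
      _ = s⁻¹ * (e.1 * (s * s⁻¹)) * (f.1 * s) := by rw [← hc]
      _ = (s⁻¹ * e.1 * s) * (s⁻¹ * f.1 * s) := by simp only [mul_assoc]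
  refine ⟨⟨?_, ?_, ?_⟩, ?_⟩
  · show φ (econj s ezero) = false
    have : econj s ezero = (ezero : IdemE S) := by
      apply Subtype.ext
      show s⁻¹ * (0 : S) * s = 0
      rw [mul_zero, zero_mul]
    rw [this, hz]
  · intro e f
    show φ (econj s (emul e f)) = _
    rw [conj_mul, hmul]
  · refine ⟨⟨s * s⁻¹, rr_idem s⟩, ?_⟩
    have : econj s ⟨s * s⁻¹, rr_idem s⟩ = (⟨s⁻¹ * s, dd_idem s⟩ : IdemE S) := by
      apply Subtype.ext
      show s⁻¹ * (s * s⁻¹) * s = s⁻¹ * s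
      rw [← mul_assoc, inv_mul_inv]
    show φ (econj s ⟨s * s⁻¹, rr_idem s⟩) = true
    rw [this, hs]
  · intro p hp
    have h := hX _ (hXinv p hp s)
    simp only at h
    rw [h]
    constructor
    · rintro ⟨g, hg, hgt⟩
      obtain ⟨f, hf, rfl⟩ := Finset.mem_image.mp hg
      exact ⟨f, hf, hgt⟩
    · rintro ⟨f, hf, hft⟩
      exact ⟨econj s f, Finset.mem_image_of_mem _ hf, hft⟩

end InverseSemigroupWithZero
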